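/- arXiv:2105.12817 — 5 statements merged into one kernel-verified Lean document; each statement's English description precedes it below -/
import Mathlib

section
/- The function u defined piecewise by u(x) = F + κ_B h (T_a − F) x / ζ for 0 ≤ x ≤ l and u(x) = F + h(T_a − F)(l(κ_B − κ_A) + κ_A x)/ζ for l < x ≤ L, where ζ = κ_A κ_B + κ_A h L + (κ_B − κ_A) h l, satisfies: u'' = 0 on (0,l) and on (l,L), u(0) = F, continuity u(l⁻) = u(l⁺), flux continuity κ_A u'(l⁻) = κ_B u'(l⁺), and the Robin condition κ_B u'(L) = −h(u(L) − T_a). -/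
open Set Filter

theorem stmt_0 (l L κA κB h F Ta ζ : ℝ)
    (hl : 0 < l) (hlL : l < L) (hκA : 0 < κA) (hκB : 0 < κB) (hh : 0 < h)
    (hF : Ta < F)
    (hζ : ζ = κA * κB + κA * h * L + (κB - κA) * h * l)
    (u : ℝ → ℝ)
    (hu : ∀ x, u x = if x ≤ l then F + κB * h * (Ta - F) / ζ * x
          else F + h * (Ta - F) * (l * (κB - κA) + κA * x) / ζ) :
    (∀ x ∈ Ioo (0:ℝ) l, deriv (deriv u) x = 0) ∧
    (∀ x ∈ Ioo l L, deriv (deriv u) x = 0) ∧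
    u 0 = F ∧
    Tendsto u (nhdsWithin l (Iio l)) (nhds (u l)) ∧
    Tendsto u (nhdsWithin l (Ioi l)) (nhds (u l)) ∧
    κA * derivWithin u (Iio l) l = κB * derivWithin u (Ioi l) l ∧
    κB * derivWithin u (Iic L) L = -h * (u L - Ta) := by
  have hζpos : 0 < ζ := by
    rw [hζ]
    nlinarith [mul_pos hκA hκB, mul_pos (mul_pos hκA hh) (sub_pos.2 hlL), mul_pos (mul_pos hκB hh) hl]
  have hζne : ζ ≠ 0 := ne_of_gt hζpos
  set c1 : ℝ := κB * h * (Ta - F) / ζ with hc1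
  set c2 : ℝ := h * (Ta - F) * κA / ζ with hc2
  set a2 : ℝ := F + h * (Ta - F) * (l * (κB - κA)) / ζ with ha2
  -- u agrees with affine functions
  have hu1 : ∀ x ≤ l, u x = F + c1 * x := by
    intro x hx; rw [hu x, if_pos hx]
  have hu2 : ∀ x, l < x → u x = a2 + c2 * x := by
    intro x hx; rw [hu x, if_neg (not_le.2 hx), ha2, hc2]; ring
  -- derivatives of the affine pieces
  have hd1 : ∀ x : ℝ, HasDerivAt (fun y => F + c1 * y) c1 x := by
    intro x
    simpa using ((hasDerivAt_id x).const_mul c1).const_add F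
  have hd2 : ∀ x : ℝ, HasDerivAt (fun y => a2 + c2 * y) c2 x := by
    intro x
    simpa using ((hasDerivAt_id x).const_mul c2).const_add a2
  have hdf1 : deriv (fun y : ℝ => F + c1 * y) = fun _ => c1 := by
    funext y; exact (hd1 y).deriv
  have hdf2 : deriv (fun y : ℝ => a2 + c2 * y) = fun _ => c2 := by
    funext y; exact (hd2 y).deriv
  refine ⟨?_, ?_, ?_, ?_, ?_, ?_, ?_⟩
  · intro x hx
    have hev : u =ᶠ[nhds x] fun y => F + c1 * y := by
      filter_upwards [Iio_mem_nhds hx.2] with y hy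
      exact hu1 y (le_of_lt hy)
    rw [hev.deriv.deriv_eq, hdf1, deriv_const]
  · intro x hx
    have hev : u =ᶠ[nhds x] fun y => a2 + c2 * y := by
      filter_upwards [Ioi_mem_nhds hx.1] with y hy
      exact hu2 y hy
    rw [hev.deriv.deriv_eq, hdf2, deriv_const]
  · rw [hu1 0 (le_of_lt hl)]; ring
  · have hev : u =ᶠ[nhdsWithin l (Iio l)] fun y => F + c1 * y := by
      filter_upwards [eventually_mem_nhdsWithin] with y hy
      exact hu1 y (le_of_lt hy)
    have : Tendsto (fun y => F + c1 * y) (nhdsWithin l (Iio l)) (nhds (F + c1 * l)) :=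
      ((continuous_const.add (continuous_const.mul continuous_id)).tendsto l).mono_left
        nhdsWithin_le_nhds
    rw [hu1 l le_rfl]
    exact this.congr' hev.symm
  · have hev : u =ᶠ[nhdsWithin l (Ioi l)] fun y => a2 + c2 * y := by
      filter_upwards [eventually_mem_nhdsWithin] with y hy
      exact hu2 y hy
    have hul : u l = a2 + c2 * l := by
      rw [hu1 l le_rfl, hc1, ha2, hc2]; ring
    have : Tendsto (fun y => a2 + c2 * y) (nhdsWithin l (Ioi l)) (nhds (a2 + c2 * l)) :=
      ((continuous_const.add (continuous_const.mul continuous_id)).tendsto l).mono_left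
        nhdsWithin_le_nhds
    rw [hul]
    exact this.congr' hev.symm
  · have h1 : derivWithin u (Iio l) l = c1 := by
      have hev : u =ᶠ[nhdsWithin l (Iio l)] fun y => F + c1 * y := by
        filter_upwards [eventually_mem_nhdsWithin] with y hy
        exact hu1 y (le_of_lt hy)
      rw [hev.derivWithin_eq (hu1 l le_rfl)]
      exact ((hd1 l).hasDerivWithinAt).derivWithin (uniqueDiffWithinAt_Iio l)
    have h2 : derivWithin u (Ioi l) l = c2 := by
      have hev : u =ᶠ[nhdsWithin l (Ioi l)] fun y => a2 + c2 * y := by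
        filter_upwards [eventually_mem_nhdsWithin] with y hy
        exact hu2 y hy
      have hul : u l = a2 + c2 * l := by
        rw [hu1 l le_rfl, hc1, ha2, hc2]; ring
      rw [hev.derivWithin_eq hul]
      exact ((hd2 l).hasDerivWithinAt).derivWithin (uniqueDiffWithinAt_Ioi l)
    rw [h1, h2, hc1, hc2]; ring
  · have hL : derivWithin u (Iic L) L = c2 := by
      have hev : u =ᶠ[nhdsWithin L (Iic L)] fun y => a2 + c2 * y := by
        filter_upwards [mem_nhdsWithin_of_mem_nhds (Ioi_mem_nhds hlL)] with y hy
        exact hu2 y hy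
      rw [hev.derivWithin_eq (hu2 L hlL)]
      exact ((hd2 L).hasDerivWithinAt).derivWithin (uniqueDiffOn_Iic L L self_mem_Iic)
    rw [hL, hu2 L hlL, hc2, ha2]
    field_simp
    linear_combination (F - Ta) * hζ
end

section
/- Let q and q̂ be two flux values in (0, q̄_M) with corresponding conductivities κ_A and κ̂_A given by the inversion formula κ = q h l κ_B/(h κ_B(F − T_a) − q h(L−l) − q κ_B). Then |1/κ_A − 1/κ̂_A| = (F − T_a)/(l q q̂) · |q − q̂|. -/
open Set

theorem stmt_8 (l L κB h F Ta q q' κA κA' : ℝ)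
    (hκB : 0 < κB) (hh : 0 < h) (hl : 0 < l) (hlL : l < L) (hF : Ta < F)
    (hq : q ∈ Ioo 0 (h * κB * (F - Ta) / (κB + h * (L - l))))
    (hq' : q' ∈ Ioo 0 (h * κB * (F - Ta) / (κB + h * (L - l))))
    (hκA : κA = q * h * l * κB / (h * κB * (F - Ta) - q * h * (L - l) - q * κB))
    (hκA' : κA' = q' * h * l * κB / (h * κB * (F - Ta) - q' * h * (L - l) - q' * κB)) :
    |1 / κA - 1 / κA'| = (F - Ta) / (l * q * q') * |q - q'| := by
  obtain ⟨hq0, hqM⟩ := hq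
  obtain ⟨hq0', hqM'⟩ := hq'
  have hden : 0 < κB + h * (L - l) := by nlinarith
  have hD : 0 < h * κB * (F - Ta) - q * h * (L - l) - q * κB := by
    have := (lt_div_iff₀ hden).mp hqM
    nlinarith
  have hD' : 0 < h * κB * (F - Ta) - q' * h * (L - l) - q' * κB := by
    have := (lt_div_iff₀ hden).mp hqM'
    nlinarith
  have key : 1 / κA - 1 / κA' = (F - Ta) / (l * q * q') * (q' - q) := by
    rw [hκA, hκA']
    field_simp
    ring
  rw [key, abs_mul, abs_of_pos (div_pos (by linarith) (by positivity) : (0:ℝ) < (F - Ta) / (l * q * q')),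
    abs_sub_comm]
end

section
/- For κ_A(q) = q h l κ_B/(h κ_B(F − T_a) − q h(L−l) − q κ_B) on (0, q̄_M), the elasticity (q/κ_A(q))·κ_A'(q) equals (F − T_a) h κ_B/(h κ_B(F − T_a) − q(κ_B + h(L−l))). -/
open Set

theorem stmt_13 (l L κB h F Ta : ℝ)
    (hκB : 0 < κB) (hh : 0 < h) (hl : 0 < l) (hlL : l < L) (hF : Ta < F)
    (κA : ℝ → ℝ)
    (hκA : ∀ q, κA q = q * h * l * κB / (h * κB * (F - Ta) - q * h * (L - l) - q * κB))
    (qM : ℝ) (hqM : qM = h * κB * (F - Ta) / (κB + h * (L - l))) :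
    ∀ q ∈ Ioo 0 qM,
      q / κA q * deriv κA q
        = (F - Ta) * h * κB / (h * κB * (F - Ta) - q * (κB + h * (L - l))) := by
  intro q hq
  obtain ⟨hq0, hqlt⟩ := hq
  have hb : 0 < κB + h * (L - l) := by nlinarith
  have hD : 0 < h * κB * (F - Ta) - q * h * (L - l) - q * κB := by
    have : q * (κB + h * (L - l)) < h * κB * (F - Ta) := by
      rw [hqM] at hqlt
      calc q * (κB + h * (L - l))
          < (h * κB * (F - Ta) / (κB + h * (L - l))) * (κB + h * (L - l)) := by
            exact mul_lt_mul_of_pos_right hqlt hb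
        _ = h * κB * (F - Ta) := div_mul_cancel₀ _ (ne_of_gt hb)
    nlinarith
  have hDne : h * κB * (F - Ta) - q * h * (L - l) - q * κB ≠ 0 := ne_of_gt hD
  have hnum : HasDerivAt (fun x : ℝ => x * h * l * κB) (((1 * h) * l) * κB) q :=
    (((hasDerivAt_id q).mul_const h).mul_const l).mul_const κB
  have hden : HasDerivAt (fun x : ℝ => h * κB * (F - Ta) - x * h * (L - l) - x * κB)
      ((0 - (1 * h) * (L - l)) - 1 * κB) q := by
    exact (((hasDerivAt_const q (h * κB * (F - Ta))).sub
      (((hasDerivAt_id q).mul_const h).mul_const (L - l)))).sub ((hasDerivAt_id q).mul_const κB)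
  have hder : HasDerivAt κA
      ((((1 * h) * l * κB) * (h * κB * (F - Ta) - q * h * (L - l) - q * κB)
        - (q * h * l * κB) * ((0 - (1 * h) * (L - l)) - 1 * κB))
        / (h * κB * (F - Ta) - q * h * (L - l) - q * κB) ^ 2) q := by
    have := hnum.div hden hDne
    have hfun : κA = fun x : ℝ =>
        x * h * l * κB / (h * κB * (F - Ta) - x * h * (L - l) - x * κB) := funext hκA
    rw [hfun]
    exact this
  rw [hder.deriv, hκA q]
  have hq0' : q ≠ 0 := ne_of_gt hq0
  have hl' : l ≠ 0 := ne_of_gt hl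
  have hκB' : κB ≠ 0 := ne_of_gt hκB
  have hh' : h ≠ 0 := ne_of_gt hh
  have hDne2 : h * κB * (F - Ta) - q * (κB + h * (L - l)) ≠ 0 := by
    intro hc; apply hDne; nlinarith
  have hDne3 : h * (κB * (F - Ta) - q * (L - l)) - q * κB ≠ 0 := by
    intro hc; apply hDne; linarith
  field_simp
  ring
end

section
/- For all x in [0,L], the two-material solution u satisfies T_a < u(x) ≤ F, with u(0) = F and u(L) = F + h(T_a − F)(l κ_B + (L−l)κ_A)/ζ > T_a. -/
open Set

theorem stmt_17 (l L κA κB h F Ta ζ : ℝ)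
    (hκA : 0 < κA) (hκB : 0 < κB) (hh : 0 < h) (hl : 0 < l) (hlL : l < L)
    (hF : Ta < F)
    (hζ : ζ = κA * κB + κA * h * L + (κB - κA) * h * l)
    (u : ℝ → ℝ)
    (hu : ∀ x, u x = if x ≤ l then F + κB * h * (Ta - F) / ζ * x
          else F + h * (Ta - F) * (l * (κB - κA) + κA * x) / ζ) :
    (∀ x ∈ Icc (0:ℝ) L, Ta < u x ∧ u x ≤ F) ∧
    u 0 = F ∧
    u L = F + h * (Ta - F) * (l * κB + (L - l) * κA) / ζ ∧
    Ta < u L := by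
  have hζpos : 0 < ζ := by
    rw [hζ]; nlinarith [mul_pos hκA hκB, mul_pos (mul_pos hκA hh) (sub_pos.2 hlL),
      mul_pos (mul_pos hκB hh) hl]
  have key : ∀ x ∈ Icc (0:ℝ) L, Ta < u x ∧ u x ≤ F := by
    intro x hx
    obtain ⟨hx0, hxL⟩ := hx
    rw [hu]
    by_cases hxl : x ≤ l
    · rw [if_pos hxl]
      constructor
      · rw [show F + κB * h * (Ta - F) / ζ * x = F + κB * h * (Ta - F) * x / ζ by ring,
          ← sub_lt_iff_lt_add']
        apply (lt_div_iff₀ hζpos).2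
        subst hζ
        nlinarith [mul_pos (sub_pos.2 hF) (mul_pos hκA hκB),
          mul_nonneg (sub_pos.2 hF).le (mul_nonneg (mul_nonneg hκA.le hh.le) (sub_pos.2 hlL).le),
          mul_nonneg (sub_pos.2 hF).le (mul_nonneg (mul_nonneg hκB.le hh.le) (sub_nonneg.2 hxl))]
      · rw [show F + κB * h * (Ta - F) / ζ * x = F + κB * h * (Ta - F) * x / ζ by ring]
        have : κB * h * (Ta - F) * x / ζ ≤ 0 := by
          apply div_nonpos_of_nonpos_of_nonneg _ hζpos.le
          have h1 : 0 ≤ κB * h * x := by positivity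
          nlinarith
        linarith
    · rw [if_neg hxl]
      push_neg at hxl
      constructor
      · rw [← sub_lt_iff_lt_add']
        apply (lt_div_iff₀ hζpos).2
        subst hζ
        nlinarith [mul_pos (sub_pos.2 hF) (mul_pos hκA hκB),
          mul_nonneg (sub_pos.2 hF).le (mul_nonneg (mul_nonneg hκA.le hh.le) (sub_nonneg.2 hxL))]
      · have hnn : 0 ≤ l * (κB - κA) + κA * x := by
          nlinarith [mul_nonneg hκA.le (sub_nonneg.2 hxl.le), mul_pos hκB hl]
        have : h * (Ta - F) * (l * (κB - κA) + κA * x) / ζ ≤ 0 := by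
          apply div_nonpos_of_nonpos_of_nonneg _ hζpos.le
          exact mul_nonpos_of_nonpos_of_nonneg (by nlinarith) hnn
        linarith
  refine ⟨key, ?_, ?_, ?_⟩
  · rw [hu]; simp [hl.le]
  · rw [hu]; rw [if_neg (by linarith)]; ring_nf
  · exact (key L ⟨by linarith, le_refl L⟩).1
end

section
/- The forward map κ_A ↦ q(κ_A) = κ_A κ_B h(F − T_a)/(κ_A κ_B + κ_A h(L−l) + κ_B h l) is a bijection from (0, ∞) onto (0, q̄_M), where q̄_M = h κ_B(F − T_a)/(κ_B + h(L−l)), with inverse q ↦ q h l κ_B/(h κ_B(F − T_a) − q h(L−l) − q κ_B). -/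
open Set

theorem stmt_19 (l L κB h F Ta : ℝ)
    (hκB : 0 < κB) (hh : 0 < h) (hl : 0 < l) (hlL : l < L) (hF : Ta < F) :
    Set.BijOn
      (fun κA : ℝ => κA * κB * h * (F - Ta) / (κA * κB + κA * h * (L - l) + κB * h * l))
      (Ioi 0) (Ioo 0 (h * κB * (F - Ta) / (κB + h * (L - l)))) ∧
    (∀ κA ∈ Ioi (0:ℝ),
      (fun q : ℝ => q * h * l * κB / (h * κB * (F - Ta) - q * h * (L - l) - q * κB))
        ((fun κA : ℝ => κA * κB * h * (F - Ta) / (κA * κB + κA * h * (L - l) + κB * h * l)) κA)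
        = κA) ∧
    (∀ q ∈ Ioo 0 (h * κB * (F - Ta) / (κB + h * (L - l))),
      (fun κA : ℝ => κA * κB * h * (F - Ta) / (κA * κB + κA * h * (L - l) + κB * h * l))
        ((fun q : ℝ => q * h * l * κB / (h * κB * (F - Ta) - q * h * (L - l) - q * κB)) q)
        = q) := by
  have hFT : 0 < F - Ta := sub_pos.mpr hF
  have hLl : 0 < L - l := sub_pos.mpr hlL
  have hB : 0 < κB + h * (L - l) := by positivity
  -- forward map sends (0,∞) into the interval
  have hmapsf : ∀ κA : ℝ, 0 < κA →
      κA * κB * h * (F - Ta) / (κA * κB + κA * h * (L - l) + κB * h * l)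
        ∈ Ioo 0 (h * κB * (F - Ta) / (κB + h * (L - l))) := by
    intro κA hκA
    have hD : 0 < κA * κB + κA * h * (L - l) + κB * h * l := by positivity
    constructor
    · have hnum : 0 < κA * κB * h * (F - Ta) := by positivity
      exact div_pos hnum hD
    · rw [div_lt_div_iff₀ hD hB]
      nlinarith [mul_pos (mul_pos (mul_pos hh hκB) hFT) (mul_pos (mul_pos hκB hh) hl)]
  -- positivity of the inverse map's denominator on the interval
  have hdenpos : ∀ q ∈ Ioo 0 (h * κB * (F - Ta) / (κB + h * (L - l))),
      0 < h * κB * (F - Ta) - q * h * (L - l) - q * κB := by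
    intro q hq
    have := (lt_div_iff₀ hB).mp hq.2
    nlinarith
  -- inverse map sends the interval into (0,∞)
  have hmapsg : ∀ q ∈ Ioo 0 (h * κB * (F - Ta) / (κB + h * (L - l))),
      0 < q * h * l * κB / (h * κB * (F - Ta) - q * h * (L - l) - q * κB) := by
    intro q hq
    exact div_pos (mul_pos (mul_pos (mul_pos hq.1 hh) hl) hκB) (hdenpos q hq)
  -- left inverse
  have glinv : ∀ κA : ℝ, 0 < κA →
      (κA * κB * h * (F - Ta) / (κA * κB + κA * h * (L - l) + κB * h * l)) * h * l * κB /
        (h * κB * (F - Ta)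
          - (κA * κB * h * (F - Ta) / (κA * κB + κA * h * (L - l) + κB * h * l)) * h * (L - l)
          - (κA * κB * h * (F - Ta) / (κA * κB + κA * h * (L - l) + κB * h * l)) * κB) = κA := by
    intro κA hκA
    have hD : 0 < κA * κB + κA * h * (L - l) + κB * h * l := by positivity
    have hfd := hdenpos _ (hmapsf κA hκA)
    rw [div_eq_iff (ne_of_gt hfd)]
    field_simp
    ring
  -- right inverse
  have frinv : ∀ q ∈ Ioo 0 (h * κB * (F - Ta) / (κB + h * (L - l))),
      (q * h * l * κB / (h * κB * (F - Ta) - q * h * (L - l) - q * κB)) * κB * h * (F - Ta) /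
        ((q * h * l * κB / (h * κB * (F - Ta) - q * h * (L - l) - q * κB)) * κB
          + (q * h * l * κB / (h * κB * (F - Ta) - q * h * (L - l) - q * κB)) * h * (L - l)
          + κB * h * l) = q := by
    intro q hq
    have hd := hdenpos q hq
    have hg := hmapsg q hq
    set G := q * h * l * κB / (h * κB * (F - Ta) - q * h * (L - l) - q * κB) with hG
    have hD : 0 < G * κB + G * h * (L - l) + κB * h * l := by positivity
    rw [div_eq_iff (ne_of_gt hD), hG]
    field_simp [hd.ne']
    have hd2 : h * (κB * (F - Ta) - q * (L - l)) - q * κB ≠ 0 := by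
      intro h0; nlinarith [hd]
    field_simp
    ring
  refine ⟨?_, fun κA hκA => glinv κA hκA, fun q hq => frinv q hq⟩
  have InvOn : Set.InvOn
      (fun q : ℝ => q * h * l * κB / (h * κB * (F - Ta) - q * h * (L - l) - q * κB))
      (fun κA : ℝ => κA * κB * h * (F - Ta) / (κA * κB + κA * h * (L - l) + κB * h * l))
      (Ioi 0) (Ioo 0 (h * κB * (F - Ta) / (κB + h * (L - l)))) :=
    ⟨fun κA hκA => glinv κA hκA, fun q hq => frinv q hq⟩
  exact InvOn.bijOn (fun κA hκA => hmapsf κA hκA) (fun q hq => hmapsg q hq)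
end
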